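/- Let C ⊆ E be a convex set of diameter at most D > 0, and let T : E → E map C into C and be α-gradually expansive on C with α ∈ (0, √2 - 1), i.e., ‖T(x) - T(y)‖ ≤ (1 + α·max(‖T(x) - x‖, ‖T(y) - y‖)/D)·‖x - y‖ for all x, y ∈ C. Let β ∈ (0,1) satisfy β² ≥ α·(1+α)/(1-α), let ε̄ > 0, let y₀ ∈ C satisfy ‖T(y₀) - y₀‖ ≤ ε̄, set λ = (β²·ε̄/D)/(1 + β²·ε̄/D), and let the sequence (y_j) be defined by y_{j+1} = λ·y₀ + (1-λ)·T(y_j). Then for every j ≥ 0, ‖T(y_j) - y_j‖ ≤ (1-λ)·(1 + α + β²)·ε̄. -/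

import Mathlib

set_option maxHeartbeats 1000000

private lemma halpern_key (D α β ε l r r' : ℝ) (hD0 : 0 < D) (hα0 : 0 < α) (hα1 : α < 1)
    (hε : 0 < ε) (hαβ : α * (1 + α) ≤ β ^ 2 * (1 - α)) (hβ0 : 0 < β)
    (hl0 : 0 ≤ l) (hl1 : l ≤ 1)
    (hsl : (1 - l) * (D + β ^ 2 * ε) = D)
    (hr0 : 0 ≤ r) (hrR : r ≤ (1 - l) * (1 + α) * ε) (hr'0 : 0 ≤ r')
    (H : r' ≤ (1 - l) * (1 + α * (l * D + r') / D) * r) :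
    r' ≤ (1 - l) * (1 + α) * ε := by
  have hβε : 0 < β ^ 2 * ε := mul_pos (pow_pos hβ0 2) hε
  have hP : 0 < D + β ^ 2 * ε := by linarith
  have hlD : l * D = (1 - l) * (β ^ 2 * ε) := by linear_combination -hsl
  have H' : r' * D ≤ (1 - l) * (D + α * (l * D + r')) * r := by
    have he : ((1 - l) * (1 + α * (l * D + r') / D) * r) * D
        = (1 - l) * (D + α * (l * D + r')) * r := by
      field_simp
    calc r' * D ≤ ((1 - l) * (1 + α * (l * D + r') / D) * r) * D :=
          mul_le_mul_of_nonneg_right H hD0.le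
      _ = (1 - l) * (D + α * (l * D + r')) * r := he
  have H2 : r' * (D + β ^ 2 * ε) ≤ r * D + α * l * r * D + α * r * r' := by
    have h3 := mul_le_mul_of_nonneg_right H' hP.le
    have h4 : ((1 - l) * (D + α * (l * D + r')) * r) * (D + β ^ 2 * ε)
        = (r * D + α * l * r * D + α * r * r') * D := by
      linear_combination ((D + α * (l * D + r')) * r) * hsl
    have h5 : (r' * (D + β ^ 2 * ε)) * D ≤ (r * D + α * l * r * D + α * r * r') * D := by
      calc (r' * (D + β ^ 2 * ε)) * D = (r' * D) * (D + β ^ 2 * ε) := by ring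
        _ ≤ ((1 - l) * (D + α * (l * D + r')) * r) * (D + β ^ 2 * ε) := h3
        _ = (r * D + α * l * r * D + α * r * r') * D := h4
    exact le_of_mul_le_mul_right h5 hD0
  have hr2 : r * (D + β ^ 2 * ε) ≤ (1 + α) * ε * D := by
    have he : ((1 - l) * (1 + α) * ε) * (D + β ^ 2 * ε) = (1 + α) * ε * D := by
      linear_combination ((1 + α) * ε) * hsl
    calc r * (D + β ^ 2 * ε) ≤ ((1 - l) * (1 + α) * ε) * (D + β ^ 2 * ε) :=
          mul_le_mul_of_nonneg_right hrR hP.le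
      _ = (1 + α) * ε * D := he
  have hαr : α * r ≤ β ^ 2 * ε := by
    have h := mul_le_mul_of_nonneg_left hr2 hα0.le
    have h2 := mul_le_mul_of_nonneg_right hαβ (mul_pos hε hD0).le
    have h5 : (α * r) * (D + β ^ 2 * ε) ≤ (β ^ 2 * ε) * (D + β ^ 2 * ε) := by
      nlinarith [h, h2, mul_nonneg (mul_nonneg hα0.le (sq_nonneg β)) (mul_pos hε hD0).le,
        mul_nonneg hβε.le hβε.le]
    exact le_of_mul_le_mul_right h5 hP
  have hkey : α * l * D + α * r ≤ β ^ 2 * ε := by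
    have h1 : α * (l * D) = α * ((1 - l) * (β ^ 2 * ε)) := by rw [hlD]
    have h2 := mul_le_mul_of_nonneg_left hrR hα0.le
    have h3 := mul_le_mul_of_nonneg_left (mul_le_mul_of_nonneg_right hαβ hε.le)
      (by linarith : (0:ℝ) ≤ 1 - l)
    nlinarith [h1, h2, h3, mul_nonneg hl0 hβε.le]
  have hq : r' * (D + β ^ 2 * ε - α * r) ≤ r * D * (1 + α * l) := by linarith [H2]
  have hden : 0 < D + β ^ 2 * ε - α * r := by linarith
  have hαl : (0:ℝ) ≤ 1 + α * l := by nlinarith [mul_nonneg hα0.le hl0]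
  have h6 : r * (D + β ^ 2 * ε) * (D * (1 + α * l)) ≤ (1 + α) * ε * D * (D * (1 + α * l)) :=
    mul_le_mul_of_nonneg_right hr2 (mul_nonneg hD0.le hαl)
  have h7 : D * (1 + α * l) ≤ D + β ^ 2 * ε - α * r := by linarith [hkey]
  have h8 : (1 + α) * ε * D * (D * (1 + α * l)) ≤ (1 + α) * ε * D * (D + β ^ 2 * ε - α * r) :=
    mul_le_mul_of_nonneg_left h7
      (mul_nonneg (mul_nonneg (by linarith : (0:ℝ) ≤ 1 + α) hε.le) hD0.le)
  have h9 := mul_le_mul_of_nonneg_right hq hP.le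
  have h10 : r' * (D + β ^ 2 * ε) * (D + β ^ 2 * ε - α * r)
      ≤ (1 + α) * ε * D * (D + β ^ 2 * ε - α * r) := by
    calc r' * (D + β ^ 2 * ε) * (D + β ^ 2 * ε - α * r)
        = (r' * (D + β ^ 2 * ε - α * r)) * (D + β ^ 2 * ε) := by ring
      _ ≤ (r * D * (1 + α * l)) * (D + β ^ 2 * ε) := h9
      _ = r * (D + β ^ 2 * ε) * (D * (1 + α * l)) := by ring
      _ ≤ (1 + α) * ε * D * (D * (1 + α * l)) := h6
      _ ≤ (1 + α) * ε * D * (D + β ^ 2 * ε - α * r) := h8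
  have hfin : r' * (D + β ^ 2 * ε) ≤ (1 + α) * ε * D := le_of_mul_le_mul_right h10 hden
  have he2 : ((1 - l) * (1 + α) * ε) * (D + β ^ 2 * ε) = (1 + α) * ε * D := by
    linear_combination ((1 + α) * ε) * hsl
  have hlast : r' * (D + β ^ 2 * ε) ≤ ((1 - l) * (1 + α) * ε) * (D + β ^ 2 * ε) :=
    hfin.trans_eq he2.symm
  exact le_of_mul_le_mul_right hlast hP

/-- For an α-gradually expansive operator (α ∈ (0, √2 - 1)) on a convex set of
diameter at most `D`, with β² ≥ α(1+α)/(1-α) and step size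
`λ = (β²ε̄/D)/(1 + β²ε̄/D)`, all fixed-step Halpern iterates started at a point
with fixed-point error at most ε̄ satisfy
`‖T y_j - y_j‖ ≤ (1-λ)(1 + α + β²) ε̄`. -/
theorem gradually_expansive_halpern_error_invariant
    {E : Type*} [NormedAddCommGroup E] [NormedSpace ℝ E]
    (C : Set E) (hC : Convex ℝ C)
    (D : ℝ) (hD0 : 0 < D) (hdiam : ∀ x ∈ C, ∀ y ∈ C, ‖x - y‖ ≤ D)
    (T : E → E) (hTC : ∀ x ∈ C, T x ∈ C)
    (α : ℝ) (hα0 : 0 < α) (hα1 : α < Real.sqrt 2 - 1)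
    (hT : ∀ x ∈ C, ∀ y ∈ C,
      ‖T x - T y‖ ≤ (1 + α * max ‖T x - x‖ ‖T y - y‖ / D) * ‖x - y‖)
    (β : ℝ) (hβ0 : 0 < β) (hβ1 : β < 1)
    (hβ : α * (1 + α) / (1 - α) ≤ β ^ 2)
    (ε : ℝ) (hε : 0 < ε)
    (y₀ : E) (hy₀C : y₀ ∈ C) (hy₀ : ‖T y₀ - y₀‖ ≤ ε)
    (l : ℝ) (hl : l = (β ^ 2 * ε / D) / (1 + β ^ 2 * ε / D))
    (y : ℕ → E) (hy0 : y 0 = y₀)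
    (hy : ∀ j : ℕ, y (j + 1) = l • y₀ + (1 - l) • T (y j)) :
    ∀ j : ℕ, ‖T (y j) - y j‖ ≤ (1 - l) * (1 + α + β ^ 2) * ε := by
  have hsqrt2 : Real.sqrt 2 ≤ 2 := by
    nlinarith [Real.sq_sqrt (show (0:ℝ) ≤ 2 by norm_num), Real.sqrt_nonneg 2]
  have hα1' : α < 1 := by linarith
  have hαβ : α * (1 + α) ≤ β ^ 2 * (1 - α) := by
    have := (div_le_iff₀ (by linarith : (0:ℝ) < 1 - α)).mp hβ
    linarith
  have hβε : 0 < β ^ 2 * ε := mul_pos (pow_pos hβ0 2) hε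
  have ht0 : 0 < β ^ 2 * ε / D := div_pos hβε hD0
  have hl0 : 0 ≤ l := by
    rw [hl]; exact div_nonneg ht0.le (by linarith)
  have hl1 : l ≤ 1 := by
    rw [hl, div_le_one (by linarith)]; linarith
  have hsl : (1 - l) * (D + β ^ 2 * ε) = D := by
    rw [hl]; field_simp; ring
  have hlD : l * D = (1 - l) * (β ^ 2 * ε) := by linear_combination -hsl
  -- all iterates stay in C
  have hmem : ∀ j, y j ∈ C := by
    intro j
    induction j with
    | zero => rw [hy0]; exact hy₀C
    | succ n ih =>
      rw [hy n]
      exact hC hy₀C (hTC _ ih) hl0 (by linarith) (by ring)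
  -- error decomposition: e_k ≤ l D + r_k
  have he : ∀ k, ‖T (y k) - y k‖ ≤ l * D + ‖y (k + 1) - y k‖ := by
    intro k
    have hdec : T (y k) - y k = l • (T (y k) - y₀) + (y (k + 1) - y k) := by
      rw [hy k]; module
    calc ‖T (y k) - y k‖ = ‖l • (T (y k) - y₀) + (y (k + 1) - y k)‖ := by rw [← hdec]
      _ ≤ ‖l • (T (y k) - y₀)‖ + ‖y (k + 1) - y k‖ := norm_add_le _ _
      _ ≤ l * D + ‖y (k + 1) - y k‖ := by
          rw [norm_smul, Real.norm_of_nonneg hl0]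
          have h1 := hdiam _ (hTC _ (hmem k)) _ hy₀C
          have h2 := mul_le_mul_of_nonneg_left h1 hl0
          linarith
  -- main invariant on consecutive distances
  have hr : ∀ j, ‖y (j + 1) - y j‖ ≤ (1 - l) * (1 + α) * ε := by
    intro j
    induction j with
    | zero =>
      have hdec : y 1 - y 0 = (1 - l) • (T y₀ - y₀) := by
        rw [hy 0, hy0]; module
      rw [hdec, norm_smul, Real.norm_of_nonneg (by linarith)]
      nlinarith [mul_le_mul_of_nonneg_left hy₀ (by linarith : (0:ℝ) ≤ 1 - l),
        mul_nonneg (by linarith : (0:ℝ) ≤ 1 - l) (mul_nonneg hα0.le hε.le)]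
    | succ n ih =>
      by_cases hc : ‖y (n + 1 + 1) - y (n + 1)‖ ≤ (1 - l) * (1 + α) * ε
      · exact hc
      push_neg at hc
      have hdec : y (n + 1 + 1) - y (n + 1)
          = (1 - l) • (T (y (n + 1)) - T (y n)) := by
        rw [hy (n + 1), hy n]; module
      have hexp := hT (y (n + 1)) (hmem (n + 1)) (y n) (hmem n)
      have hmax : max ‖T (y (n + 1)) - y (n + 1)‖ ‖T (y n) - y n‖
          ≤ l * D + ‖y (n + 1 + 1) - y (n + 1)‖ := by
        apply max_le
        · exact he (n + 1)
        · have h1 := he n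
          linarith
      have hmono : 1 + α * max ‖T (y (n + 1)) - y (n + 1)‖ ‖T (y n) - y n‖ / D
          ≤ 1 + α * (l * D + ‖y (n + 1 + 1) - y (n + 1)‖) / D := by
        have h1 := mul_le_mul_of_nonneg_left hmax hα0.le
        have h3 := (div_le_div_iff_of_pos_right hD0).mpr h1
        linarith
      have H : ‖y (n + 1 + 1) - y (n + 1)‖
          ≤ (1 - l) * (1 + α * (l * D + ‖y (n + 1 + 1) - y (n + 1)‖) / D)
            * ‖y (n + 1) - y n‖ := by
        calc ‖y (n + 1 + 1) - y (n + 1)‖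
            = (1 - l) * ‖T (y (n + 1)) - T (y n)‖ := by
              rw [hdec, norm_smul, Real.norm_of_nonneg (by linarith)]
          _ ≤ (1 - l) * ((1 + α * max ‖T (y (n + 1)) - y (n + 1)‖
                ‖T (y n) - y n‖ / D) * ‖y (n + 1) - y n‖) :=
              mul_le_mul_of_nonneg_left hexp (by linarith)
          _ ≤ (1 - l) * ((1 + α * (l * D + ‖y (n + 1 + 1) - y (n + 1)‖) / D)
                * ‖y (n + 1) - y n‖) := by
              have h4 := mul_le_mul_of_nonneg_right hmono (norm_nonneg (y (n + 1) - y n))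
              exact mul_le_mul_of_nonneg_left h4 (by linarith)
          _ = (1 - l) * (1 + α * (l * D + ‖y (n + 1 + 1) - y (n + 1)‖) / D)
              * ‖y (n + 1) - y n‖ := by ring
      exact halpern_key D α β ε l _ _ hD0 hα0 hα1' hε hαβ hβ0 hl0 hl1 hsl
        (norm_nonneg _) ih (norm_nonneg _) H
  intro j
  have h1 := he j
  have h2 := hr j
  nlinarith [h1, h2, hlD]
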